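/- Let G be a connected graph with vertex cover U of size t and independent set I = V(G)\U. If after exhaustively deleting every vertex u ∈ I for which there exists another vertex v ∈ I with N(u) ⊆ N(v), the resulting graph G' satisfies |V(G')| ≤ t + 2^t/√t. -/

import Mathlib

open SimpleGraph

lemma aux_centralBinom (n : ℕ) :
    (2 * n + 1) * (Nat.centralBinom n) ^ 2 ≤ 4 ^ (2 * n) := by
  induction n with
  | zero => simp [Nat.centralBinom]
  | succ n ih =>
    have key := Nat.succ_mul_centralBinom_succ n
    have key2 : ((n + 1) * Nat.centralBinom (n + 1)) ^ 2
        = (2 * (2 * n + 1) * Nat.centralBinom n) ^ 2 := by rw [key]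
    have hpow : 4 ^ (2 * (n + 1)) = 16 * 4 ^ (2 * n) := by ring
    have hcancel : (0 : ℕ) < (n + 1) ^ 2 := by positivity
    have main : (2 * (n + 1) + 1) * (Nat.centralBinom (n + 1)) ^ 2 * (n + 1) ^ 2
        ≤ (16 * 4 ^ (2 * n)) * (n + 1) ^ 2 := by
      nlinarith [sq_nonneg (Nat.centralBinom n), ih, key2,
        Nat.mul_le_mul_right ((Nat.centralBinom n) ^ 2)
          (show (2 * n + 3) * (2 * n + 1) ≤ 4 * (n + 1) ^ 2 by nlinarith)]
    have := Nat.le_of_mul_le_mul_right main hcancel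
    rw [hpow]
    exact this

lemma aux_choose_sq (t : ℕ) : t * (t.choose (t / 2)) ^ 2 ≤ 4 ^ t := by
  rcases Nat.even_or_odd t with ⟨m, hm⟩ | ⟨m, hm⟩
  · subst hm
    have h2 : (m + m) / 2 = m := by omega
    have h3 : m + m = 2 * m := by ring
    rw [h2, h3]
    have : (2 * m).choose m = Nat.centralBinom m := rfl
    rw [this]
    calc 2 * m * Nat.centralBinom m ^ 2 ≤ (2 * m + 1) * Nat.centralBinom m ^ 2 :=
          Nat.mul_le_mul_right _ (by omega)
      _ ≤ 4 ^ (2 * m) := aux_centralBinom m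
  · subst hm
    have h2 : (2 * m + 1) / 2 = m := by omega
    rw [h2]
    have hdouble : Nat.centralBinom (m + 1) = 2 * (2 * m + 1).choose m := by
      have h4 : 2 * (m + 1) = 2 * m + 1 + 1 := by ring
      show (2 * (m + 1)).choose (m + 1) = _
      rw [h4, Nat.choose_succ_succ, Nat.choose_symm_half]
      ring
    have key := aux_centralBinom (m + 1)
    rw [hdouble] at key
    have : 4 * ((2 * m + 1) * ((2 * m + 1).choose m) ^ 2) ≤ 4 * 4 ^ (2 * m + 1) := by
      calc 4 * ((2 * m + 1) * ((2 * m + 1).choose m) ^ 2)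
          ≤ (2 * (m + 1) + 1) * (2 * (2 * m + 1).choose m) ^ 2 := by nlinarith
        _ ≤ 4 ^ (2 * (m + 1)) := key
        _ = 4 * 4 ^ (2 * m + 1) := by ring
    exact Nat.le_of_mul_le_mul_left this (by norm_num)

lemma aux_choose_real {t : ℕ} (ht : 1 ≤ t) :
    (t.choose (t / 2) : ℝ) ≤ 2 ^ t / Real.sqrt t := by
  have htpos : (0 : ℝ) < t := by exact_mod_cast ht
  have hsqrt : (0 : ℝ) < Real.sqrt t := Real.sqrt_pos.2 htpos
  rw [le_div_iff₀ hsqrt, mul_comm]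
  have h1 : Real.sqrt t * (t.choose (t / 2) : ℝ)
      = Real.sqrt (t * ((t.choose (t / 2) : ℝ)) ^ 2) := by
    rw [Real.sqrt_mul (le_of_lt htpos), Real.sqrt_sq (by positivity)]
  rw [h1]
  have h2 : (t : ℝ) * ((t.choose (t / 2) : ℝ)) ^ 2 ≤ 4 ^ t := by
    have := aux_choose_sq t
    calc (t : ℝ) * ((t.choose (t / 2) : ℝ)) ^ 2
        = ((t * (t.choose (t / 2)) ^ 2 : ℕ) : ℝ) := by push_cast; ring
      _ ≤ ((4 ^ t : ℕ) : ℝ) := by exact_mod_cast this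
      _ = 4 ^ t := by push_cast; ring
  calc Real.sqrt ((t : ℝ) * ((t.choose (t / 2) : ℝ)) ^ 2)
      ≤ Real.sqrt (4 ^ t) := Real.sqrt_le_sqrt h2
    _ = 2 ^ t := by
        rw [show (4 : ℝ) ^ t = (2 ^ t) ^ 2 by
          rw [show (4 : ℝ) = 2 ^ 2 by norm_num, ← pow_mul, mul_comm 2 t, pow_mul]]
        exact Real.sqrt_sq (by positivity)

/-- Kernel size bound: if `U` is a vertex cover of a connected graph `G` of size `t ≥ 1`
and no vertex of the independent set `I = V(G) \ U` has its neighbourhood contained in the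
neighbourhood of another vertex of `I` (i.e. the reduction rule has been applied
exhaustively), then `|V(G)| ≤ t + 2^t / √t`. -/
theorem reduced_graph_size_le
    {V : Type*} [Fintype V] (G : SimpleGraph V) (hG : G.Connected)
    (U : Finset V) (t : ℕ) (htU : U.card = t) (ht : 1 ≤ t)
    (hVC : ∀ ⦃x y : V⦄, G.Adj x y → x ∈ U ∨ y ∈ U)
    (hred : ∀ u v : V, u ∉ U → v ∉ U → u ≠ v →
      ¬ (G.neighborSet u ⊆ G.neighborSet v)) :
    (Fintype.card V : ℝ) ≤ t + 2 ^ t / Real.sqrt t := by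
  classical
  set f : V → Finset {x // x ∈ U} := fun v => (G.neighborFinset v).subtype (· ∈ U) with hf
  -- subset transfer
  have hsub : ∀ u v : V, u ∉ U → f u ⊆ f v → G.neighborSet u ⊆ G.neighborSet v := by
    intro u v hu hfs x hx
    have hadj : G.Adj u x := hx
    have hxU : x ∈ U := (hVC hadj).resolve_left hu
    have hmem : (⟨x, hxU⟩ : {x // x ∈ U}) ∈ f u := by
      simp [hf, Finset.mem_subtype, SimpleGraph.mem_neighborFinset, hadj]
    have := hfs hmem
    simp only [hf, Finset.mem_subtype, SimpleGraph.mem_neighborFinset] at this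
    exact this
  set 𝒜 : Finset (Finset {x // x ∈ U}) := Uᶜ.image f with hA
  have hinj : Set.InjOn f ↑(Uᶜ) := by
    intro u hu v hv huv
    by_contra hne
    simp only [Finset.coe_compl, Set.mem_compl_iff, Finset.mem_coe] at hu hv
    exact hred u v hu hv hne (hsub u v hu (le_of_eq huv))
  have hcardA : 𝒜.card = Uᶜ.card := Finset.card_image_of_injOn hinj
  have hanti : IsAntichain (· ⊆ ·) (↑𝒜 : Set (Finset {x // x ∈ U})) := by
    intro a ha b hb hab hsub'
    simp only [hA, Finset.coe_image, Set.mem_image, Finset.mem_coe, Finset.mem_compl] at ha hb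
    obtain ⟨u, hu, rfl⟩ := ha
    obtain ⟨v, hv, rfl⟩ := hb
    have hne : u ≠ v := fun h => hab (by rw [h])
    exact hred u v hu hv hne (hsub u v hu hsub')
  have hsperner := IsAntichain.sperner hanti
  rw [Fintype.card_coe, htU] at hsperner
  have hI : (Uᶜ.card : ℝ) ≤ 2 ^ t / Real.sqrt t := by
    calc (Uᶜ.card : ℝ) = (𝒜.card : ℝ) := by rw [hcardA]
      _ ≤ (t.choose (t / 2) : ℝ) := by exact_mod_cast hsperner
      _ ≤ 2 ^ t / Real.sqrt t := aux_choose_real ht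
  have hcardV : Fintype.card V = U.card + Uᶜ.card := (Finset.card_add_card_compl U).symm
  rw [hcardV, htU]
  push_cast
  linarith
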